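/- Let M be a matrix over a field F and let 0 < r ≤ spr(M). Then the rank-r rigidity of M satisfies R_M(r) ≥ (spr(M) − r)^2 / 4. -/
import Mathlib


open Matrix MeasureTheory

/-- A blocky matrix: its support is a disjoint union of combinatorial rectangles,
with value 1 on the support and 0 elsewhere. -/
def IsBlocky {F : Type*} [Field F] {m n : Type*} (M : Matrix m n F) : Prop :=
  ∃ (k : ℕ) (S : Fin k → Finset m) (T : Fin k → Finset n),
    (∀ a b, a ≠ b → Disjoint (S a) (S b)) ∧
    (∀ a b, a ≠ b → Disjoint (T a) (T b)) ∧
    (∀ i j, (∃ l, i ∈ S l ∧ j ∈ T l) → M i j = 1) ∧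
    (∀ i j, (¬ ∃ l, i ∈ S l ∧ j ∈ T l) → M i j = 0)

/-- A spiky matrix: the entrywise product of a blocky matrix and a rank-one matrix. -/
def IsSpiky {F : Type*} [Field F] {m n : Type*} (M : Matrix m n F) : Prop :=
  ∃ (B : Matrix m n F) (u : m → F) (v : n → F),
    IsBlocky B ∧ ∀ i j, M i j = B i j * (u i * v j)

/-- The spiky rank: minimum number of spiky matrices summing to `M`. -/
noncomputable def spikyRank {F : Type*} [Field F] {m n : Type*} (M : Matrix m n F) : ℕ :=
  sInf {r | ∃ f : Fin r → Matrix m n F, (∀ i, IsSpiky (f i)) ∧ ∑ i, f i = M}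

/-- The blocky rank: minimum number of blocky matrices whose linear combination equals `M`. -/
noncomputable def blockyRank {F : Type*} [Field F] {m n : Type*} (M : Matrix m n F) : ℕ :=
  sInf {r | ∃ (f : Fin r → Matrix m n F) (c : Fin r → F),
    (∀ i, IsBlocky (f i)) ∧ ∑ i, c i • f i = M}

/-- Sparsity: the number of nonzero entries of a matrix. -/
noncomputable def matSparsity {F : Type*} [Zero F] {m n : Type*} (M : Matrix m n F) : ℕ :=
  {p : m × n | M p.1 p.2 ≠ 0}.ncard

/-- Rank-`r` rigidity: minimum number of entries that must be changed to bring the rank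
down to `r`. -/
noncomputable def rigidity {F : Type*} [Field F] {N : ℕ}
    (M : Matrix (Fin N) (Fin N) F) (r : ℕ) : ℕ :=
  sInf {s | ∃ A C : Matrix (Fin N) (Fin N) F, M = A + C ∧ A.rank ≤ r ∧ matSparsity C ≤ s}

/-- Sign spiky rank: minimum spiky rank over real matrices with the same sign pattern. -/
noncomputable def signSpikyRank {m n : Type*} (M : Matrix m n ℝ) : ℕ :=
  sInf {r | ∃ A : Matrix m n ℝ,
    (∀ i j, Real.sign (A i j) = Real.sign (M i j)) ∧ spikyRank A ≤ r}

/-- Blocky cover number: minimum number of blocky matrices whose supports' union is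
exactly the set of 1-entries of the Boolean matrix `M`. -/
noncomputable def blockyCover {m n : Type*} (M : Matrix m n ℝ) : ℕ :=
  sInf {k | ∃ f : Fin k → Matrix m n ℝ, (∀ l, IsBlocky (f l)) ∧
    ∀ i j, M i j = 1 ↔ ∃ l, f l i j = 1}
section Helpers
open Finset
variable {F : Type*} [Field F] {N : ℕ}

lemma isBlocky_ones : IsBlocky (Matrix.of fun _ _ => (1 : F) : Matrix (Fin N) (Fin N) F) := by
  refine ⟨1, fun _ => Finset.univ, fun _ => Finset.univ, ?_, ?_, fun i j _ => rfl, ?_⟩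
  · intro a b hab; exact absurd (Subsingleton.elim a b) hab
  · intro a b hab; exact absurd (Subsingleton.elim a b) hab
  · intro i j h; exact absurd ⟨0, Finset.mem_univ i, Finset.mem_univ j⟩ h

lemma isSpiky_vecMulVec (u v : Fin N → F) :
    IsSpiky (Matrix.vecMulVec u v) :=
  ⟨Matrix.of fun _ _ => (1 : F), u, v, isBlocky_ones, fun i j => by
    simp [Matrix.vecMulVec_apply]⟩

lemma isSpiky_of_row (i0 : Fin N) (M : Matrix (Fin N) (Fin N) F)
    (h : ∀ i j, i ≠ i0 → M i j = 0) : IsSpiky M := by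
  classical
  refine ⟨Matrix.of fun _ _ => (1 : F), fun i => if i = i0 then 1 else 0,
    fun j => M i0 j, isBlocky_ones, fun i j => ?_⟩
  by_cases hi : i = i0
  · subst hi; simp
  · simp [hi, h i j hi]

lemma isSpiky_of_fun (σ : Fin N → Fin N) (M : Matrix (Fin N) (Fin N) F)
    (h : ∀ i j, M i j ≠ 0 → j = σ i) : IsSpiky M := by
  classical
  refine ⟨Matrix.of fun i j => if σ i = j then 1 else 0,
    fun i => M i (σ i), fun _ => 1, ?_, fun i j => ?_⟩
  · refine ⟨N, fun l => Finset.univ.filter (fun i => σ i = l), fun l => {l}, ?_, ?_, ?_, ?_⟩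
    · intro a b hab
      rw [Finset.disjoint_left]
      intro i hi hi'
      simp only [Finset.mem_filter] at hi hi'
      exact hab (hi.2 ▸ hi'.2 ▸ rfl)
    · intro a b hab
      rw [Finset.disjoint_left]
      intro x hx hx'
      simp only [Finset.mem_singleton] at hx hx'
      exact hab (hx ▸ hx' ▸ rfl)
    · intro i j hij
      obtain ⟨l, hl1, hl2⟩ := hij
      simp only [Finset.mem_filter, Finset.mem_singleton] at hl1 hl2
      simp [Matrix.of_apply, hl2 ▸ hl1.2]
    · intro i j hij
      have : σ i ≠ j := by
        intro hc
        exact hij ⟨j, by simp [hc], by simp⟩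
      simp [Matrix.of_apply, this]
  · by_cases hj : σ i = j
    · subst hj; simp
    · have : M i j = 0 := by
        by_contra hc
        exact hj (h i j hc).symm
      simp [hj, this]

lemma spikyRank_le_of {k : ℕ} {M : Matrix (Fin N) (Fin N) F}
    (f : Fin k → Matrix (Fin N) (Fin N) F) (hf : ∀ i, IsSpiky (f i))
    (hsum : ∑ i, f i = M) : spikyRank M ≤ k :=
  Nat.sInf_le ⟨f, hf, hsum⟩

lemma spikyRank_exists (M : Matrix (Fin N) (Fin N) F) :
    ∃ f : Fin (spikyRank M) → Matrix (Fin N) (Fin N) F,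
      (∀ i, IsSpiky (f i)) ∧ ∑ i, f i = M := by
  classical
  have hne : {r | ∃ f : Fin r → Matrix (Fin N) (Fin N) F,
      (∀ i, IsSpiky (f i)) ∧ ∑ i, f i = M}.Nonempty := by
    refine ⟨N, fun i0 => Matrix.of fun i j => if i = i0 then M i j else 0, ?_, ?_⟩
    · intro i0
      exact isSpiky_of_row i0 _ (fun i j hij => by simp [hij])
    · ext i j
      simp [Matrix.sum_apply]
  exact Nat.sInf_mem hne

lemma spikyRank_add_le (A B : Matrix (Fin N) (Fin N) F) :
    spikyRank (A + B) ≤ spikyRank A + spikyRank B := by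
  obtain ⟨f, hf, hfs⟩ := spikyRank_exists A
  obtain ⟨g, hg, hgs⟩ := spikyRank_exists B
  refine spikyRank_le_of (Fin.append f g) ?_ ?_
  · intro i
    refine Fin.addCases (fun i => ?_) (fun i => ?_) i
    · rw [Fin.append_left]; exact hf i
    · rw [Fin.append_right]; exact hg i
  · rw [Fin.sum_univ_add]
    simp only [Fin.append_left, Fin.append_right, hfs, hgs]

end Helpers
section RankLemma
open Finset
variable {F : Type*} [Field F] {N : ℕ}

lemma spikyRank_le_rank (A : Matrix (Fin N) (Fin N) F) : spikyRank A ≤ A.rank := by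
  classical
  have hrank : A.rank = Module.finrank F (Submodule.span F (Set.range Aᵀ)) :=
    A.rank_eq_finrank_span_cols
  set V := Submodule.span F (Set.range Aᵀ) with hV
  have hmem : ∀ j, Aᵀ j ∈ V := fun j => Submodule.subset_span ⟨j, rfl⟩
  let b := Module.finBasis F V
  refine le_trans (spikyRank_le_of
    (fun l => Matrix.vecMulVec (fun i => (b l : Fin N → F) i)
      (fun j => b.repr ⟨Aᵀ j, hmem j⟩ l))
    (fun l => isSpiky_vecMulVec _ _) ?_) hrank.ge
  ext i j
  rw [Matrix.sum_apply]
  have hx := congrArg (fun v : V => (v : Fin N → F) i) (b.sum_repr ⟨Aᵀ j, hmem j⟩)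
  simp only [Submodule.coe_sum, Finset.sum_apply, Pi.smul_apply, smul_eq_mul] at hx
  simp only [Matrix.vecMulVec_apply]
  rw [show A i j = Aᵀ j i from rfl, ← hx]
  exact Finset.sum_congr rfl fun l _ => mul_comm _ _

end RankLemma
section SparsityLemma
open Finset
variable {F : Type*} [Field F] {N : ℕ}

lemma matSparsity_eq (C : Matrix (Fin N) (Fin N) F) [DecidableEq F] :
    matSparsity C = (Finset.univ.filter fun p : Fin N × Fin N => C p.1 p.2 ≠ 0).card := by
  rw [matSparsity, Set.ncard_eq_toFinset_card']
  congr 1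
  ext p
  simp

lemma spikyRank_le_sqrt_sparsity (C : Matrix (Fin N) (Fin N) F) :
    spikyRank C ≤ 2 * Nat.sqrt (matSparsity C) := by
  classical
  set s := matSparsity C with hs
  set t := Nat.sqrt s with ht
  set rowNZ : Fin N → Finset (Fin N) := fun i => Finset.univ.filter fun j => C i j ≠ 0
    with hrowNZ
  set H : Finset (Fin N) := Finset.univ.filter fun i => t < (rowNZ i).card with hH
  -- total count
  have htotal : ∑ i, (rowNZ i).card = s := by
    rw [hs, matSparsity_eq]
    rw [Finset.card_eq_sum_card_fiberwise (f := Prod.fst) (t := Finset.univ)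
      (fun x _ => Finset.mem_univ x.1)]
    refine (Finset.sum_congr rfl fun i _ => ?_).symm
    refine Finset.card_bij (fun p _ => p.2) ?_ ?_ ?_
    · intro p hp
      simp only [Finset.mem_filter, Finset.mem_univ, true_and] at hp
      simp only [hrowNZ, Finset.mem_filter, Finset.mem_univ, true_and]
      rw [← hp.2]; exact hp.1
    · intro p hp q hq hpq
      simp only [Finset.mem_filter, Finset.mem_univ, true_and] at hp hq
      exact Prod.ext (hp.2.trans hq.2.symm) hpq
    · intro j hj
      simp only [hrowNZ, Finset.mem_filter, Finset.mem_univ, true_and] at hj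
      exact ⟨(i, j), by simp [hj], rfl⟩
  -- heavy rows bound
  have hHcard : H.card ≤ t := by
    have h1 : H.card * (t + 1) ≤ ∑ i ∈ H, (rowNZ i).card := by
      have := Finset.card_nsmul_le_sum H (fun i => (rowNZ i).card) (t + 1)
        (fun i hi => by
          simp only [hH, Finset.mem_filter] at hi
          show t + 1 ≤ (rowNZ i).card
          omega)
      simpa [smul_eq_mul] using this
    have h2 : ∑ i ∈ H, (rowNZ i).card ≤ s := by
      rw [← htotal]
      exact Finset.sum_le_sum_of_subset (Finset.subset_univ H)
    have h3 : s < (t + 1) * (t + 1) := by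
      rw [ht]; exact Nat.lt_succ_sqrt s
    by_contra hc
    push_neg at hc
    have : (t + 1) * (t + 1) ≤ H.card * (t + 1) := Nat.mul_le_mul_right _ hc
    omega
  -- split
  set CH : Matrix (Fin N) (Fin N) F := Matrix.of fun i j => if i ∈ H then C i j else 0
    with hCH
  set CL : Matrix (Fin N) (Fin N) F := Matrix.of fun i j => if i ∈ H then 0 else C i j
    with hCL
  have hsplit : C = CH + CL := by
    ext i j
    by_cases hi : i ∈ H <;> simp [hCH, hCL, hi]
  -- spiky rank of CH
  have hCHrank : spikyRank CH ≤ t := by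
    refine le_trans (spikyRank_le_of
      (fun l : Fin H.card => Matrix.of fun i j =>
        if i = (H.equivFin.symm l : Fin N) then C i j else 0)
      (fun l => isSpiky_of_row (H.equivFin.symm l : Fin N) _
        (fun i j hij => by simp [Matrix.of_apply, hij])) ?_) hHcard
    ext i j
    rw [Matrix.sum_apply]
    by_cases hi : i ∈ H
    · rw [Finset.sum_eq_single (H.equivFin ⟨i, hi⟩)]
      · simp [hCH, hi]
      · intro l _ hl
        have : (H.equivFin.symm l : Fin N) ≠ i := by
          intro hc
          apply hl
          have : H.equivFin.symm l = ⟨i, hi⟩ := Subtype.ext hc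
          rw [← this, Equiv.apply_symm_apply]
        simp [Ne.symm this]
      · intro h; exact absurd (Finset.mem_univ _) h
    · have : ∀ l ∈ Finset.univ, (Matrix.of fun i j =>
          if i = (H.equivFin.symm l : Fin N) then C i j else 0) i j = 0 := by
        intro l _
        have : i ≠ (H.equivFin.symm l : Fin N) := by
          intro hc
          exact hi (hc ▸ (H.equivFin.symm l).2)
        simp [this]
      rw [Finset.sum_eq_zero this]
      simp [hCH, hi]
  -- spiky rank of CL
  set cols : Fin N → Finset (Fin N) := fun i => Finset.univ.filter fun j => CL i j ≠ 0
    with hcols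
  have hcolscard : ∀ i, (cols i).card ≤ t := by
    intro i
    by_cases hi : i ∈ H
    · have : cols i = ∅ := by
        rw [hcols]
        ext j
        simp [hCL, hi]
      simp [this]
    · have hsub : cols i ⊆ rowNZ i := by
        intro j hj
        simp only [hcols, hCL, Finset.mem_filter, Matrix.of_apply, hi, if_false] at hj
        simp only [hrowNZ, Finset.mem_filter]
        exact ⟨Finset.mem_univ j, hj.2⟩
      have hle := Finset.card_le_card hsub
      simp only [hH, Finset.mem_filter, Finset.mem_univ, true_and, not_lt] at hi
      omega
  have hCLrank : spikyRank CL ≤ t := by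
    refine spikyRank_le_of
      (fun l : Fin t => Matrix.of fun i j =>
        if h : ∃ hl : (l : ℕ) < (cols i).card,
            ((cols i).orderIsoOfFin rfl ⟨l, hl⟩ : Fin N) = j then CL i j else 0)
      (fun l => ?_) ?_
    · refine isSpiky_of_fun
        (fun i => if h : (l : ℕ) < (cols i).card
          then ((cols i).orderIsoOfFin rfl ⟨l, h⟩ : Fin N) else i) _ ?_
      intro i j hij
      simp only [Matrix.of_apply] at hij
      by_cases h : ∃ hl : (l : ℕ) < (cols i).card,
          ((cols i).orderIsoOfFin rfl ⟨l, hl⟩ : Fin N) = j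
      · obtain ⟨hl, hj⟩ := h
        show j = if h : (l : ℕ) < (cols i).card
          then (((cols i).orderIsoOfFin rfl ⟨l, h⟩ : {x // x ∈ cols i}) : Fin N) else i
        rw [dif_pos hl]
        exact hj.symm
      · rw [dif_neg h] at hij
        exact absurd rfl hij
    · ext i j
      rw [Matrix.sum_apply]
      by_cases hj : CL i j = 0
      · rw [Finset.sum_eq_zero]
        · exact hj.symm
        · intro l _
          simp only [Matrix.of_apply]
          split <;> simp [hj]
      · have hjc : j ∈ cols i := by
          simp only [hcols, Finset.mem_filter]
          exact ⟨Finset.mem_univ j, hj⟩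
        set k0 : Fin (cols i).card := ((cols i).orderIsoOfFin rfl).symm ⟨j, hjc⟩ with hk0
        have hk0t : (k0 : ℕ) < t := lt_of_lt_of_le k0.2 (hcolscard i)
        rw [Finset.sum_eq_single (⟨(k0 : ℕ), hk0t⟩ : Fin t)]
        · simp only [Matrix.of_apply]
          have hex : ∃ hl : ((⟨(k0 : ℕ), hk0t⟩ : Fin t) : ℕ) < (cols i).card,
              (((cols i).orderIsoOfFin rfl ⟨(⟨(k0 : ℕ), hk0t⟩ : Fin t), hl⟩ :
                {x // x ∈ cols i}) : Fin N) = j := by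
            refine ⟨k0.2, ?_⟩
            have h1 : (⟨((⟨(k0 : ℕ), hk0t⟩ : Fin t) : ℕ), k0.2⟩ : Fin (cols i).card) = k0 := rfl
            rw [h1, hk0, OrderIso.apply_symm_apply]
          rw [dif_pos hex]
        · intro l _ hl
          simp only [Matrix.of_apply]
          rw [dif_neg]
          rintro ⟨hlc, hle⟩
          apply hl
          have h1 : ((cols i).orderIsoOfFin rfl ⟨l, hlc⟩ : {x // x ∈ cols i}) = ⟨j, hjc⟩ :=
            Subtype.ext hle
          have h2 : (⟨l, hlc⟩ : Fin (cols i).card) = k0 := by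
            rw [hk0, ← h1, OrderIso.symm_apply_apply]
          have : (l : ℕ) = (k0 : ℕ) := congrArg Fin.val h2
          exact Fin.ext this
        · intro h; exact absurd (Finset.mem_univ _) h
  calc spikyRank C = spikyRank (CH + CL) := by rw [← hsplit]
    _ ≤ spikyRank CH + spikyRank CL := spikyRank_add_le _ _
    _ ≤ t + t := Nat.add_le_add hCHrank hCLrank
    _ = 2 * t := by ring

end SparsityLemma
/-- Large spiky rank implies high rigidity. -/
theorem rigidity_ge_of_spikyRank {F : Type*} [Field F] {N : ℕ}
    (M : Matrix (Fin N) (Fin N) F) (r : ℕ) (hr : 0 < r) (hrs : r ≤ spikyRank M) :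
    ((spikyRank M : ℝ) - r) ^ 2 / 4 ≤ (rigidity M r : ℝ) := by
  classical
  have hne : {s | ∃ A C : Matrix (Fin N) (Fin N) F,
      M = A + C ∧ A.rank ≤ r ∧ matSparsity C ≤ s}.Nonempty :=
    ⟨matSparsity M, 0, M, by simp, by rw [Matrix.rank_zero]; exact Nat.zero_le r, le_refl _⟩
  have hmem : ∃ A C : Matrix (Fin N) (Fin N) F,
      M = A + C ∧ A.rank ≤ r ∧ matSparsity C ≤ rigidity M r := Nat.sInf_mem hne
  obtain ⟨A, C, hMAC, hrank, hC⟩ := hmem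
  have hspr : spikyRank M ≤ r + 2 * Nat.sqrt (matSparsity C) := by
    calc spikyRank M = spikyRank (A + C) := by rw [hMAC]
      _ ≤ spikyRank A + spikyRank C := spikyRank_add_le _ _
      _ ≤ r + 2 * Nat.sqrt (matSparsity C) :=
          Nat.add_le_add (le_trans (spikyRank_le_rank A) hrank)
            (spikyRank_le_sqrt_sparsity C)
  set t := Nat.sqrt (matSparsity C) with htdef
  have ht2 : t * t ≤ matSparsity C := by have := Nat.sqrt_le' (matSparsity C); rwa [pow_two] at this
  have h1 : (r : ℝ) ≤ (spikyRank M : ℝ) := by exact_mod_cast hrs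
  have h2 : (spikyRank M : ℝ) ≤ r + 2 * t := by exact_mod_cast hspr
  have h3 : (t : ℝ) * t ≤ (rigidity M r : ℝ) := by exact_mod_cast le_trans ht2 hC
  have h4 : ((spikyRank M : ℝ) - r) ^ 2 ≤ (2 * (t : ℝ)) ^ 2 :=
    pow_le_pow_left₀ (by linarith) (by linarith) 2
  have h5 : (2 * (t : ℝ)) ^ 2 = 4 * ((t : ℝ) * t) := by ring
  linarith
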